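/- Let f : ℝⁿ → ℝ and F : ℝⁿ → ℝᵐ be differentiable, ρ > 0, and define P : ℝⁿ × ℝᵐ × ℝⁿ × ℝ → ℝ by P(x,λ,y,γ) = f(x) + ⟨λ,F(x)⟩ + (ρ/2)‖F(x)‖² + (γ/2)‖x−y‖². If (x,λ,y,γ) with γ > 0 is a critical point of P, i.e. the (Fréchet) derivative of P vanishes at (x,λ,y,γ), then x = y, F(x) = 0, and ∇f(x) + F'(x)ᵀλ = 0; in particular (x,λ) is a first-order (stationary) point of the problem min f(x) s.t. F(x) = 0. -/

import Mathlib

open scoped RealInnerProductSpace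

/-- Critical points of the Lyapunov function `P(x,λ,y,γ)` with `γ > 0` yield
stationary points: if the Fréchet derivative of `P` vanishes at `(x,λ,y,γ)`,
then `x = y`, `F(x) = 0` and `∇f(x) + F'(x)ᵀλ = 0`. -/
theorem stmt_11 (n m : ℕ)
    (f : EuclideanSpace ℝ (Fin n) → ℝ)
    (F : EuclideanSpace ℝ (Fin n) → EuclideanSpace ℝ (Fin m))
    (hf : Differentiable ℝ f) (hF : Differentiable ℝ F)
    (ρ : ℝ) (hρ : 0 < ρ)
    (x y : EuclideanSpace ℝ (Fin n)) (lam : EuclideanSpace ℝ (Fin m))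
    (γ : ℝ) (hγ : 0 < γ)
    (hcrit : fderiv ℝ
        (fun p : EuclideanSpace ℝ (Fin n) × EuclideanSpace ℝ (Fin m) ×
            EuclideanSpace ℝ (Fin n) × ℝ =>
          f p.1 + ⟪p.2.1, F p.1⟫ + ρ / 2 * ‖F p.1‖ ^ 2 +
            p.2.2.2 / 2 * ‖p.1 - p.2.2.1‖ ^ 2)
        (x, lam, y, γ) = 0) :
    x = y ∧ F x = 0 ∧
      gradient f x + ContinuousLinearMap.adjoint (fderiv ℝ F x) lam = 0 := by
  classical
  have hPdiff : Differentiable ℝ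
      (fun p : EuclideanSpace ℝ (Fin n) × EuclideanSpace ℝ (Fin m) ×
          EuclideanSpace ℝ (Fin n) × ℝ =>
        f p.1 + ⟪p.2.1, F p.1⟫ + ρ / 2 * ‖F p.1‖ ^ 2 +
          p.2.2.2 / 2 * ‖p.1 - p.2.2.1‖ ^ 2) := by
    have h1 : Differentiable ℝ (fun p : EuclideanSpace ℝ (Fin n) × EuclideanSpace ℝ (Fin m) ×
        EuclideanSpace ℝ (Fin n) × ℝ => f p.1) := hf.comp differentiable_fst
    have h2 : Differentiable ℝ (fun p : EuclideanSpace ℝ (Fin n) × EuclideanSpace ℝ (Fin m) ×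
        EuclideanSpace ℝ (Fin n) × ℝ => ⟪p.2.1, F p.1⟫) :=
      Differentiable.inner ℝ differentiable_snd.fst (hF.comp differentiable_fst)
    have h3 : Differentiable ℝ (fun p : EuclideanSpace ℝ (Fin n) × EuclideanSpace ℝ (Fin m) ×
        EuclideanSpace ℝ (Fin n) × ℝ => ρ / 2 * ‖F p.1‖ ^ 2) :=
      (differentiable_const _).mul (Differentiable.norm_sq ℝ (hF.comp differentiable_fst))
    have h4 : Differentiable ℝ (fun p : EuclideanSpace ℝ (Fin n) × EuclideanSpace ℝ (Fin m) ×
        EuclideanSpace ℝ (Fin n) × ℝ => p.2.2.2 / 2 * ‖p.1 - p.2.2.1‖ ^ 2) := by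
      have ha : Differentiable ℝ (fun p : EuclideanSpace ℝ (Fin n) × EuclideanSpace ℝ (Fin m) ×
          EuclideanSpace ℝ (Fin n) × ℝ => p.2.2.2 / 2) := by
        have : Differentiable ℝ (fun p : EuclideanSpace ℝ (Fin n) × EuclideanSpace ℝ (Fin m) ×
            EuclideanSpace ℝ (Fin n) × ℝ => p.2.2.2) := differentiable_snd.snd.snd
        fun_prop
      have hb : Differentiable ℝ (fun p : EuclideanSpace ℝ (Fin n) × EuclideanSpace ℝ (Fin m) ×
          EuclideanSpace ℝ (Fin n) × ℝ => ‖p.1 - p.2.2.1‖ ^ 2) :=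
        Differentiable.norm_sq ℝ (differentiable_fst.sub differentiable_snd.snd.fst)
      exact ha.mul hb
    exact ((h1.add h2).add h3).add h4
  have key : ∀ (v : EuclideanSpace ℝ (Fin n) × EuclideanSpace ℝ (Fin m) ×
      EuclideanSpace ℝ (Fin n) × ℝ) (c : ℝ),
      HasDerivAt (fun t : ℝ =>
        f ((x, lam, y, γ) + t • v).1 +
          ⟪((x, lam, y, γ) + t • v).2.1, F ((x, lam, y, γ) + t • v).1⟫ +
          ρ / 2 * ‖F ((x, lam, y, γ) + t • v).1‖ ^ 2 +
          ((x, lam, y, γ) + t • v).2.2.2 / 2 *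
            ‖((x, lam, y, γ) + t • v).1 - ((x, lam, y, γ) + t • v).2.2.1‖ ^ 2) c 0 →
      c = 0 := by
    intro v c hc
    have hline : HasDerivAt (fun t : ℝ => (x, lam, y, γ) + t • v) v 0 := by
      simpa using ((hasDerivAt_id (0:ℝ)).smul_const v).const_add (x, lam, y, γ)
    have hP0 : HasFDerivAt
        (fun p : EuclideanSpace ℝ (Fin n) × EuclideanSpace ℝ (Fin m) ×
            EuclideanSpace ℝ (Fin n) × ℝ =>
          f p.1 + ⟪p.2.1, F p.1⟫ + ρ / 2 * ‖F p.1‖ ^ 2 +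
            p.2.2.2 / 2 * ‖p.1 - p.2.2.1‖ ^ 2)
        (0 : _ →L[ℝ] ℝ) ((x, lam, y, γ) + (0:ℝ) • v) := by
      have h := (hPdiff (x, lam, y, γ)).hasFDerivAt
      rw [hcrit] at h
      simpa using h
    have h2 := hP0.comp_hasDerivAt 0 hline
    simpa using hc.unique h2
  -- Step 1: x = y (γ-direction)
  have hxy : x = y := by
    have h1 : ‖x - y‖ ^ 2 / 2 = 0 := by
      apply key ((0 : EuclideanSpace ℝ (Fin n)), (0 : EuclideanSpace ℝ (Fin m)),
        (0 : EuclideanSpace ℝ (Fin n)), (1 : ℝ))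
      have hd : HasDerivAt (fun t : ℝ =>
          f x + ⟪lam, F x⟫ + ρ / 2 * ‖F x‖ ^ 2 + (γ + t) / 2 * ‖x - y‖ ^ 2)
          (‖x - y‖ ^ 2 / 2) 0 := by
        have h := ((((hasDerivAt_id (0:ℝ)).const_add γ).div_const 2).mul_const
          (‖x - y‖ ^ 2)).const_add (f x + ⟪lam, F x⟫ + ρ / 2 * ‖F x‖ ^ 2)
        simpa [add_assoc, div_eq_mul_inv, mul_comm, mul_assoc, mul_left_comm] using h
      simpa [Prod.smul_mk, Prod.mk_add_mk, smul_zero, smul_eq_mul, mul_one] using hd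
    have : ‖x - y‖ = 0 := by
      have := (div_eq_zero_iff.mp h1).resolve_right (by norm_num)
      exact pow_eq_zero_iff (by norm_num) |>.mp this
    rw [← sub_eq_zero]
    exact norm_eq_zero.mp this
  -- Step 2: F x = 0 (λ-direction)
  have hFx : F x = 0 := by
    have h1 : ⟪F x, F x⟫ = (0:ℝ) := by
      apply key ((0 : EuclideanSpace ℝ (Fin n)), F x,
        (0 : EuclideanSpace ℝ (Fin n)), (0 : ℝ))
      have hd : HasDerivAt (fun t : ℝ =>
          f x + (⟪lam, F x⟫ + t * ⟪F x, F x⟫) + ρ / 2 * ‖F x‖ ^ 2 +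
            γ / 2 * ‖x - y‖ ^ 2) ⟪F x, F x⟫ 0 := by
        have h := ((((hasDerivAt_id (0:ℝ)).mul_const (⟪F x, F x⟫ : ℝ)).const_add
          (⟪lam, F x⟫ : ℝ)).const_add (f x)).add_const
          (ρ / 2 * ‖F x‖ ^ 2 + γ / 2 * ‖x - y‖ ^ 2)
        simpa [add_assoc] using h
      simpa [Prod.smul_mk, Prod.mk_add_mk, smul_zero, smul_eq_mul, mul_zero,
        inner_add_left, real_inner_smul_left, add_assoc, Finset.mul_sum, mul_assoc] using hd
    rw [← @inner_self_eq_zero ℝ]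
    exact h1
  refine ⟨hxy, hFx, ?_⟩
  -- Step 3: x-direction
  have hdir : ∀ v : EuclideanSpace ℝ (Fin n),
      fderiv ℝ f x v + ⟪lam, fderiv ℝ F x v⟫ = 0 := by
    intro v
    apply key (v, (0 : EuclideanSpace ℝ (Fin m)), (0 : EuclideanSpace ℝ (Fin n)), (0 : ℝ))
    have hlineE : HasDerivAt (fun t : ℝ => x + t • v) v 0 := by
      simpa using ((hasDerivAt_id (0:ℝ)).smul_const v).const_add x
    have hAf : HasDerivAt (fun t : ℝ => f (x + t • v)) (fderiv ℝ f x v) 0 := by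
      have h := (hf (x + (0:ℝ) • v)).hasFDerivAt.comp_hasDerivAt 0 hlineE
      simpa [Function.comp_def] using h
    have hAF : HasDerivAt (fun t : ℝ => F (x + t • v)) (fderiv ℝ F x v) 0 := by
      have h := (hF (x + (0:ℝ) • v)).hasFDerivAt.comp_hasDerivAt 0 hlineE
      simpa [Function.comp_def] using h
    have h2 : HasDerivAt (fun t : ℝ => (⟪lam, F (x + t • v)⟫ : ℝ))
        (⟪lam, fderiv ℝ F x v⟫ + ⟪(0 : EuclideanSpace ℝ (Fin m)), F (x + (0:ℝ) • v)⟫) 0 :=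
      (hasDerivAt_const 0 lam).inner ℝ hAF
    have h3 : HasDerivAt (fun t : ℝ => ρ / 2 * ‖F (x + t • v)‖ ^ 2)
        (ρ / 2 * (2 * ⟪F (x + (0:ℝ) • v), fderiv ℝ F x v⟫)) 0 :=
      (hAF.norm_sq).const_mul (ρ / 2)
    have h4 : HasDerivAt (fun t : ℝ => γ / 2 * ‖(x + t • v) - y‖ ^ 2)
        (γ / 2 * (2 * ⟪(x + (0:ℝ) • v) - y, v⟫)) 0 :=
      ((hlineE.sub_const y).norm_sq).const_mul (γ / 2)
    have hsum := ((hAf.add h2).add h3).add h4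
    have hval : fderiv ℝ f x v +
        (⟪lam, fderiv ℝ F x v⟫ + ⟪(0 : EuclideanSpace ℝ (Fin m)), F (x + (0:ℝ) • v)⟫) +
        ρ / 2 * (2 * ⟪F (x + (0:ℝ) • v), fderiv ℝ F x v⟫) +
        γ / 2 * (2 * ⟪(x + (0:ℝ) • v) - y, v⟫) =
        fderiv ℝ f x v + ⟪lam, fderiv ℝ F x v⟫ := by
      have hFy : F y = 0 := by rw [← hxy]; exact hFx
      simp [hFx, hFy, hxy]
    rw [hval] at hsum
    simpa [Prod.smul_mk, Prod.mk_add_mk, smul_zero, smul_eq_mul, mul_zero, add_zero, Pi.add_def] using hsum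
  -- conclude
  have hid : ∀ v, (⟪gradient f x + ContinuousLinearMap.adjoint (fderiv ℝ F x) lam, v⟫ : ℝ) = 0 := by
    intro v
    rw [inner_add_left, ContinuousLinearMap.adjoint_inner_left]
    have hg : fderiv ℝ f x v = ⟪gradient f x, v⟫ := by
      rw [(hf x).hasGradientAt.hasFDerivAt.fderiv]
      exact InnerProductSpace.toDual_apply_apply
    rw [← hg]
    exact hdir v
  have := hid (gradient f x + ContinuousLinearMap.adjoint (fderiv ℝ F x) lam)
  exact inner_self_eq_zero.mp this
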